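/- Let d be a pseudometric on a set X, P ⊆ X a subset with d(x,y) ≥ 1 for all distinct x, y ∈ P, and m a probability measure defined on all subsets of P with m({x}) = 0 for every x ∈ P. For each finite S ⊆ P let f_S(x) = min(1, d(x,S)) and f_P(x) = min(1, d(x,P)). Then each f_S and f_P lie in Lip(d), the net (f_S) indexed by finite subsets of P ordered by inclusion converges pointwise to f_P, ∫_P f_S dm = 1 for every finite S, and ∫_P f_P dm = 0. -/

import Mathlib

open Filter MeasureTheory Topology Set

/-- `d` is a pseudometric on `X`. -/
def IsPseudometric {X : Type*} (d : X → X → ℝ) : Prop :=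
  (∀ x, d x x = 0) ∧ (∀ x y, d x y = d y x) ∧ (∀ x y, 0 ≤ d x y) ∧
    ∀ x y z, d x z ≤ d x y + d y z

/-- `Lip d`: functions bounded by 1 that are 1-Lipschitz for `d`. -/
def Lip {X : Type*} (d : X → X → ℝ) : Set (X → ℝ) :=
  {f | (∀ x, |f x| ≤ 1) ∧ ∀ x x', |f x - f x'| ≤ d x x'}

/-- `U` is open in the (possibly non-Hausdorff) topology induced by the pseudometric `d`. -/
def DOpen {X : Type*} (d : X → X → ℝ) (U : Set X) : Prop :=
  ∀ x ∈ U, ∃ ε > 0, ∀ y, d x y < ε → y ∈ U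

/-- `U` is a cozero set of a bounded uniformly continuous real function on `X`. -/
def IsCozero (X : Type*) [UniformSpace X] (U : Set X) : Prop :=
  ∃ f : X → ℝ, UniformContinuous f ∧ (∃ C, ∀ x, |f x| ≤ C) ∧ U = {x | f x ≠ 0}

/-- The σ-algebra generated by the cozero sets of `X`. -/
def cozMS (X : Type*) [UniformSpace X] : MeasurableSpace X :=
  MeasurableSpace.generateFrom {U | IsCozero X U}

/-- The pseudometric topology of `d` is separable. -/
def DSeparable {X : Type*} (d : X → X → ℝ) : Prop :=
  ∃ D : Set X, D.Countable ∧ ∀ x : X, ∀ ε : ℝ, 0 < ε → ∃ p ∈ D, d x p < ε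

/-- The cardinality of `A` has measure zero: every finite nonnegative countably additive
measure on the power set of `A` vanishing on singletons is zero. -/
def HasMeasureZero (A : Type*) : Prop :=
  ∀ m : @MeasureTheory.Measure A ⊤, @MeasureTheory.IsFiniteMeasure A ⊤ m →
    (∀ a : A, m {a} = 0) → m Set.univ = 0

/-- `Y` is a uniformly discrete subset of the uniform space `X`. -/
def UniformlyDiscrete {X : Type*} [UniformSpace X] (Y : Set X) : Prop :=
  ∃ d : X → X → ℝ, IsPseudometric d ∧ (UniformContinuous fun p : X × X => d p.1 p.2) ∧
    ∃ ε > 0, ∀ y ∈ Y, ∀ y' ∈ Y, y ≠ y' → ε ≤ d y y'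

/-- `X` is a uniform D-space. -/
def IsDSpace (X : Type*) [UniformSpace X] : Prop :=
  ∀ Y : Set X, UniformlyDiscrete Y → HasMeasureZero Y

/-- Distance from a point to a set. -/
noncomputable def distSet {X : Type*} (d : X → X → ℝ) (S : Set X) (x : X) : ℝ :=
  sInf ((d x) '' S)

/-- `fS d S x = min 1 (d(x,S))`, with the convention `fS d ∅ = 1`. -/
noncomputable def fS {X : Type*} (d : X → X → ℝ) (S : Set X) (x : X) : ℝ :=
  @ite _ S.Nonempty (Classical.propDecidable _) (min 1 (distSet d S x)) 1

section Aux

variable {X : Type*} (d : X → X → ℝ)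

lemma aux_bddBelow (hd : IsPseudometric d) (S : Set X) (x : X) :
    BddBelow ((d x) '' S) := by
  refine ⟨0, ?_⟩
  rintro _ ⟨s, _, rfl⟩
  exact hd.2.2.1 x s

lemma distSet_nonneg (hd : IsPseudometric d) (S : Set X) (x : X) :
    0 ≤ distSet d S x := by
  apply Real.sInf_nonneg
  rintro _ ⟨s, _, rfl⟩
  exact hd.2.2.1 x s

lemma distSet_le (hd : IsPseudometric d) {S : Set X} {s : X} (hs : s ∈ S) (x : X) :
    distSet d S x ≤ d x s :=
  csInf_le (aux_bddBelow d hd S x) (Set.mem_image_of_mem _ hs)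

lemma le_distSet (hd : IsPseudometric d) {S : Set X} (hS : S.Nonempty) {c : ℝ}
    (h : ∀ s ∈ S, c ≤ d x s) : c ≤ distSet d S x := by
  apply le_csInf (hS.image _)
  rintro _ ⟨s, hs, rfl⟩
  exact h s hs

lemma min_lip (c a b : ℝ) : |min c a - min c b| ≤ |a - b| := by
  rcases le_total c a with h1 | h1 <;> rcases le_total c b with h2 | h2 <;>
    rcases abs_cases (a - b) with ⟨h3, h4⟩ | ⟨h3, h4⟩ <;>
    simp only [min_eq_left, min_eq_right, h1, h2] <;>
    rw [abs_le] <;> constructor <;> linarith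

lemma distSet_lip (hd : IsPseudometric d) {S : Set X} (hS : S.Nonempty) (x x' : X) :
    |distSet d S x - distSet d S x'| ≤ d x x' := by
  have key : ∀ y y' : X, distSet d S y ≤ d y y' + distSet d S y' := by
    intro y y'
    have : ∀ s ∈ S, distSet d S y - d y y' ≤ d y' s := by
      intro s hs
      have h1 : distSet d S y ≤ d y s := distSet_le d hd hs y
      have h2 : d y s ≤ d y y' + d y' s := hd.2.2.2 y y' s
      linarith
    have := le_distSet d hd hS this
    linarith
  rw [abs_sub_le_iff]
  constructor
  · have := key x x'; linarith
  · have := key x' x; rw [hd.2.1 x' x] at this; linarith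

lemma fS_nonneg (hd : IsPseudometric d) (S : Set X) (x : X) : 0 ≤ fS d S x := by
  unfold fS
  split
  · exact le_min zero_le_one (distSet_nonneg d hd S x)
  · exact zero_le_one

lemma fS_le_one (S : Set X) (x : X) : fS d S x ≤ 1 := by
  unfold fS
  split
  · exact min_le_left _ _
  · exact le_refl 1

lemma fS_mem_Lip (hd : IsPseudometric d) (S : Set X) : fS d S ∈ Lip d := by
  constructor
  · intro x
    rw [abs_le]
    refine ⟨le_trans (by norm_num) (fS_nonneg d hd S x), fS_le_one d S x⟩
  · intro x x'
    unfold fS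
    split
    · rename_i h
      exact le_trans (min_lip 1 _ _) (distSet_lip d hd h x x')
    · simpa using hd.2.2.1 x x'

end Aux

/-- the counterexample net `f_S = min(1, d(·,S))`, `S` finite `⊆ P`,
for a 1-separated set `P` carrying a diffuse probability measure. -/
theorem counterexample_net {X : Type u} (d : X → X → ℝ) (hd : IsPseudometric d)
    (P : Set X) (hsep : ∀ x ∈ P, ∀ y ∈ P, x ≠ y → 1 ≤ d x y)
    (m : @MeasureTheory.Measure P ⊤) (hm : @MeasureTheory.IsProbabilityMeasure P ⊤ m)
    (hdiff : ∀ p : P, m {p} = 0) :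
    (∀ S : Finset P, fS d (Subtype.val '' (S : Set P)) ∈ Lip d) ∧
    fS d P ∈ Lip d ∧
    (∀ x : X, Tendsto (fun S : Finset P => fS d (Subtype.val '' (S : Set P)) x)
      atTop (𝓝 (fS d P x))) ∧
    (∀ S : Finset P, (∫ p : P, fS d (Subtype.val '' (S : Set P)) ↑p ∂m) = 1) ∧
    (∫ p : P, fS d P ↑p ∂m) = 0 := by
  -- value of fS on a point of P outside S
  have hval1 : ∀ (S : Finset P) (p : P), p ∉ S →
      fS d (Subtype.val '' (S : Set P)) (p : X) = 1 := by
    intro S p hp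
    unfold fS
    split
    · rename_i h
      rw [min_eq_left]
      apply le_distSet d hd h
      rintro _ ⟨q, hq, rfl⟩
      apply hsep _ p.2 _ q.2
      intro hpq
      exact hp (by simpa [Subtype.ext hpq] using hq)
    · rfl
  -- value of fS d P on a point of P is 0
  have hval0 : ∀ p : P, fS d P (p : X) = 0 := by
    intro p
    have hP : P.Nonempty := ⟨p, p.2⟩
    unfold fS
    rw [if_pos hP]
    have h0 : distSet d P (p : X) = 0 := by
      refine le_antisymm ?_ (distSet_nonneg d hd P _)
      simpa [hd.1] using distSet_le d hd p.2 (p : X)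
    simp [h0]
  refine ⟨fun S => fS_mem_Lip d hd _, fS_mem_Lip d hd _, ?_, ?_, ?_⟩
  · -- pointwise convergence
    intro x
    by_cases hP : P.Nonempty
    · rw [Metric.tendsto_nhds]
      intro ε hε
      obtain ⟨_, ⟨p, hp, rfl⟩, hplt⟩ :=
        Real.lt_sInf_add_pos (hP.image (d x)) (half_pos hε)
      rw [Filter.eventually_atTop]
      refine ⟨{⟨p, hp⟩}, fun S hS => ?_⟩
      have hpS : (p : X) ∈ Subtype.val '' (S : Set P) :=
        ⟨⟨p, hp⟩, hS (Finset.mem_singleton_self _), rfl⟩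
      have hSne : (Subtype.val '' (S : Set P)).Nonempty := ⟨p, hpS⟩
      have hsub : distSet d P x ≤ distSet d (Subtype.val '' (S : Set P)) x := by
        apply le_distSet d hd hSne
        intro s hs
        obtain ⟨q, _, rfl⟩ := hs
        exact distSet_le d hd q.2 x
      have hup : distSet d (Subtype.val '' (S : Set P)) x < distSet d P x + ε / 2 :=
        lt_of_le_of_lt (distSet_le d hd hpS x) hplt
      have e1 : fS d (Subtype.val '' (S : Set P)) x
          = min 1 (distSet d (Subtype.val '' (S : Set P)) x) := by
        unfold fS; rw [if_pos hSne]
      have e2 : fS d P x = min 1 (distSet d P x) := by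
        unfold fS; rw [if_pos hP]
      rw [Real.dist_eq, e1, e2, abs_lt]
      constructor
      · have := min_le_min (le_refl 1) hsub
        linarith
      · have h1 : min 1 (distSet d (Subtype.val '' (S : Set P)) x)
            ≤ min 1 (distSet d P x + ε / 2) := min_le_min (le_refl 1) hup.le
        have h2 : min 1 (distSet d P x + ε / 2) ≤ min 1 (distSet d P x) + ε / 2 := by
          rcases le_total 1 (distSet d P x) with h | h
          · calc min 1 (distSet d P x + ε / 2) ≤ 1 := min_le_left _ _
              _ = min 1 (distSet d P x) := (min_eq_left h).symm
              _ ≤ _ := by linarith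
          · calc min 1 (distSet d P x + ε / 2) ≤ distSet d P x + ε / 2 :=
                min_le_right _ _
              _ = min 1 (distSet d P x) + ε / 2 := by rw [min_eq_right h]
        linarith
    · -- P empty: both sides are constantly 1
      have hc : ∀ S : Finset P, fS d (Subtype.val '' (S : Set P)) x = fS d P x := by
        intro S
        have hSe : Subtype.val '' (S : Set P) = (∅ : Set X) := by
          ext y
          simp only [Set.mem_image, Set.mem_empty_iff_false, iff_false]
          rintro ⟨q, _, rfl⟩
          exact hP ⟨q, q.2⟩
        have h1 : fS d (Subtype.val '' (S : Set P)) x = 1 := by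
          rw [hSe]; unfold fS; rw [if_neg (by simp)]
        have h2 : fS d P x = 1 := by
          unfold fS; rw [if_neg hP]
        rw [h1, h2]
      exact tendsto_const_nhds.congr fun S => (hc S).symm
  · -- integral of fS over finite S is 1
    intro S
    have hS0 : m (S : Set P) = 0 := by
      refine le_antisymm ?_ zero_le
      calc m (S : Set P) = m (⋃ p ∈ S, {p}) := by
            congr 1; ext q
            constructor
            · intro hq; exact Set.mem_biUnion hq rfl
            · rintro hq
              simp only [Set.mem_iUnion, Set.mem_singleton_iff] at hq
              obtain ⟨i, hq, rfl⟩ := hq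
              exact hq
        _ ≤ ∑ p ∈ S, m {p} := measure_biUnion_finset_le S _
        _ = 0 := by simp [hdiff]
    have hae : (fun p : P => fS d (Subtype.val '' (S : Set P)) (p : X))
        =ᵐ[m] fun _ => (1 : ℝ) := by
      rw [Filter.eventuallyEq_iff_exists_mem]
      refine ⟨{p | p ∉ S}, ?_, fun p hp => hval1 S p hp⟩
      rw [MeasureTheory.mem_ae_iff]
      convert hS0 using 2
      ext p
      simp
    rw [MeasureTheory.integral_congr_ae hae]
    simp
  · -- integral of fS d P is 0
    have : (fun p : P => fS d P (p : X)) = fun _ => (0 : ℝ) := funext hval0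
    rw [this]
    simp
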